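/- Let M be an n×n real matrix with a simple eigenvalue λ₀ and eigenvector v, let S ⊆ {1,...,n} with λ₀ ∉ σ(M_{S̄S̄}), and suppose there is a permutation φ of S such that R_S(M)(λ₀)_{ij} = R_S(M)(λ₀)_{φ(i)φ(j)} for all i, j ∈ S, where R_S(M)(λ) is the isospectral reduction of M over S. If λ₀ is a simple eigenvalue of R_S(M)(λ₀) and v_S ≠ 0, then v_i = ± v_{φ(i)} for all i ∈ S. -/

import Mathlib

open Matrix

/-- Submatrix of `M` with rows indexed by `R` and columns by `C`. -/
def subm {n : ℕ} {α : Type*} (M : Matrix (Fin n) (Fin n) α) (R C : Finset (Fin n)) :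
    Matrix R C α := fun i j => M i.1 j.1

/-- Spectral radius of a complex matrix: the sup of the moduli of its eigenvalues. -/
noncomputable def specRadC {m : Type*} [Fintype m] [DecidableEq m] (A : Matrix m m ℂ) : ℝ :=
  sSup ((fun z : ℂ => ‖z‖) '' spectrum ℂ A)

/-- Spectral radius of a real matrix, via complexification. -/
noncomputable def specRad {m : Type*} [Fintype m] [DecidableEq m] (A : Matrix m m ℝ) : ℝ :=
  specRadC (A.map Complex.ofReal)

/-- A nonnegative matrix is irreducible iff its directed graph (edge `i → j` iff
`0 < A i j`) is strongly connected. -/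
def Irred {m : Type*} (A : Matrix m m ℝ) : Prop :=
  ∀ i j, Relation.TransGen (fun a b => 0 < A a b) i j

/-- The isospectral reduction `R_S(M)(λ) = M_SS − M_SS̄ (M_S̄S̄ − λI)⁻¹ M_S̄S`,
evaluated at `λ = l`. -/
noncomputable def red {n : ℕ} {α : Type*} [Field α] (M : Matrix (Fin n) (Fin n) α)
    (S : Finset (Fin n)) (l : α) : Matrix S S α :=
  subm M S S - subm M S Sᶜ * (subm M Sᶜ Sᶜ - l • 1)⁻¹ * subm M Sᶜ S

open Polynomial in
lemma aux_two_le {m : Type*} [Fintype m] [DecidableEq m] (A : Matrix m m ℝ) (l : ℝ)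
    (u w : m → ℝ) (hu : A *ᵥ u = l • u) (hw : A *ᵥ w = l • w)
    (hind : LinearIndependent ℝ ((↑) : ({u, w} : Set (m → ℝ)) → (m → ℝ)))
    (hne : u ≠ w) : 2 ≤ A.charpoly.rootMultiplicity l := by
  classical
  set f := Matrix.toLin' A with hf
  let s : Set (m → ℝ) := LinearIndepOn.extend (show LinearIndepOn ℝ id ({u, w} : Set (m → ℝ)) from hind) (Set.subset_univ _)
  let b : Module.Basis s ℝ (m → ℝ) := Module.Basis.extend (show LinearIndepOn ℝ id ({u, w} : Set (m → ℝ)) from hind)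
  haveI : Fintype s := FiniteDimensional.fintypeBasisIndex b
  have hu_mem : u ∈ s := LinearIndepOn.subset_extend (show LinearIndepOn ℝ id ({u, w} : Set (m → ℝ)) from hind) _ (by simp)
  have hw_mem : w ∈ s := LinearIndepOn.subset_extend (show LinearIndepOn ℝ id ({u, w} : Set (m → ℝ)) from hind) _ (by simp)
  set j0 : s := ⟨u, hu_mem⟩
  set j1 : s := ⟨w, hw_mem⟩
  have hjne : j1 ≠ j0 := by
    simp only [j0, j1, ne_eq, Subtype.mk.injEq]
    exact fun h => hne h.symm
  set B := LinearMap.toMatrix b b f with hB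
  have hcharB : B.charpoly = A.charpoly := by
    rw [hB, LinearMap.charpoly_toMatrix]
    conv_rhs => rw [← LinearMap.toMatrix'_toLin' A]
    rw [← LinearMap.toMatrix_eq_toMatrix', LinearMap.charpoly_toMatrix]
  have hBcol : ∀ (j : s) (x : m → ℝ), b j = x → A *ᵥ x = l • x →
      ∀ i, B i j = if i = j then l else 0 := by
    intro j x hbj hx i
    rw [hB, LinearMap.toMatrix_apply, hbj, hf, Matrix.toLin'_apply, hx, ← hbj,
      LinearEquiv.map_smul, b.repr_self]
    simp [Finsupp.single_apply, eq_comm]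
  have key : ∀ (j : s) (x : m → ℝ), b j = x → A *ᵥ x = l • x →
      ∀ i, charmatrix B i j = (X - C l) * (if i = j then 1 else 0) := by
    intro j x hbj hx i
    rcases eq_or_ne i j with h | h
    · rw [h, charmatrix_apply_eq, hBcol _ x hbj hx _, if_pos rfl, if_pos rfl, mul_one]
    · rw [charmatrix_apply_ne _ _ _ h, hBcol _ x hbj hx _, if_neg h, if_neg h, mul_zero, map_zero,
        neg_zero]
  have hb0 : b j0 = u := Module.Basis.extend_apply_self (show LinearIndepOn ℝ id ({u, w} : Set (m → ℝ)) from hind) j0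
  have hb1 : b j1 = w := Module.Basis.extend_apply_self (show LinearIndepOn ℝ id ({u, w} : Set (m → ℝ)) from hind) j1
  set g0 : s → ℝ[X] := fun i => if i = j0 then 1 else 0 with hg0
  set g1 : s → ℝ[X] := fun i => if i = j1 then 1 else 0 with hg1
  have d1 : (charmatrix B).det = (X - C l) * (updateCol (charmatrix B) j0 g0).det := by
    rw [← det_updateCol_smul]
    congr 1
    refine Matrix.ext fun i j => ?_
    rw [updateCol_apply]
    by_cases h : j = j0
    · rw [if_pos h, h, key j0 u hb0 hu i]
      simp [hg0, smul_eq_mul]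
    · rw [if_neg h]
  have d2 : (updateCol (charmatrix B) j0 g0).det =
      (X - C l) * (updateCol (updateCol (charmatrix B) j0 g0) j1 g1).det := by
    rw [← det_updateCol_smul]
    congr 1
    refine Matrix.ext fun i j => ?_
    rw [updateCol_apply, updateCol_apply, updateCol_apply]
    by_cases h : j = j1
    · rw [if_pos h, if_neg (h ▸ hjne : j ≠ j0), h, key j1 w hb1 hw i]
      simp [hg1, smul_eq_mul]
    · rw [if_neg h]
  have hdvd : (X - C l) ^ 2 ∣ A.charpoly := by
    refine ⟨(updateCol (updateCol (charmatrix B) j0 g0) j1 g1).det, ?_⟩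
    rw [← hcharB, Matrix.charpoly, d1, d2]; ring
  have h0 : A.charpoly ≠ 0 := (Matrix.charpoly_monic A).ne_zero
  exact (Polynomial.le_rootMultiplicity_iff h0).2 hdvd

/-- Uniqueness of the eigenvector for a root of multiplicity one. -/
lemma aux_eig_unique {m : Type*} [Fintype m] [DecidableEq m] (A : Matrix m m ℝ) (l : ℝ)
    (hsimp : A.charpoly.rootMultiplicity l = 1)
    (u w : m → ℝ) (hu : A *ᵥ u = l • u) (hw : A *ᵥ w = l • w) (hu0 : u ≠ 0) :
    ∃ c : ℝ, w = c • u := by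
  by_contra hc
  push_neg at hc
  have hne : u ≠ w := by
    intro h; exact hc 1 (by rw [one_smul, h])
  have hw0 : w ≠ 0 := by
    intro h; exact hc 0 (by rw [zero_smul, h])
  have h2 : LinearIndependent ℝ ![u, w] :=
    (LinearIndependent.pair_iff' hu0).2 (fun a ha => hc a ha.symm)
  have hr : Set.range ![u, w] = {u, w} := Matrix.range_cons_cons_empty u w ![]
  have hind : LinearIndependent ℝ ((↑) : ({u, w} : Set (m → ℝ)) → (m → ℝ)) :=
    h2.linearIndepOn_id' hr
  have := aux_two_le A l u w hu hw hind hne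
  omega

theorem tst : True := trivial

open Polynomial in
lemma aux_proj {n : ℕ} (M : Matrix (Fin n) (Fin n) ℝ) (S : Finset (Fin n)) (l : ℝ)
    (hl : l ∉ spectrum ℝ (subm M Sᶜ Sᶜ)) (v : Fin n → ℝ) (h_eig : M *ᵥ v = l • v) :
    red M S l *ᵥ (fun i : S => v i.1) = l • (fun i : S => v i.1) := by
  classical
  set vS : {x // x ∈ S} → ℝ := fun i => v i.1 with hvS
  set vT : {x // x ∈ Sᶜ} → ℝ := fun i => v i.1 with hvT
  set B := subm M Sᶜ Sᶜ with hBd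
  set Cm := subm M Sᶜ S with hCd
  set D := subm M S Sᶜ with hDd
  have hrow : ∀ i : Fin n,
      (∑ j : (S : Finset (Fin n)), M i j.1 * v j.1) +
      (∑ j : (Sᶜ : Finset (Fin n)), M i j.1 * v j.1) = l * v i := by
    intro i
    have h1 := congrFun h_eig i
    simp only [mulVec, dotProduct, Pi.smul_apply, smul_eq_mul] at h1
    have h2 := Finset.sum_add_sum_compl S (fun j => M i j * v j)
    rw [← Finset.sum_coe_sort S (fun j => M i j * v j),
      ← Finset.sum_coe_sort Sᶜ (fun j => M i j * v j)] at h2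
    exact h2.trans h1
  have hS : subm M S S *ᵥ vS + D *ᵥ vT = l • vS := by
    funext i
    have := hrow i.1
    simpa [mulVec, dotProduct, subm, hvS, hvT, hDd] using this
  have hT : Cm *ᵥ vS + B *ᵥ vT = l • vT := by
    funext i
    have := hrow i.1
    simpa [mulVec, dotProduct, subm, hvS, hvT, hBd, hCd] using this
  have hunit : IsUnit (B - l • 1) := by
    rw [spectrum.mem_iff, not_not] at hl
    have : algebraMap ℝ (Matrix (Sᶜ : Finset (Fin n)) (Sᶜ : Finset (Fin n)) ℝ) l = l • 1 :=
      Algebra.algebraMap_eq_smul_one l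
    rw [this] at hl
    simpa [neg_sub] using hl.neg
  have hdet : IsUnit (B - l • 1).det := (Matrix.isUnit_iff_isUnit_det _).mp hunit
  have e1 : (B - l • 1) *ᵥ vT = -(Cm *ᵥ vS) := by
    funext i
    have h2 := congrFun hT i
    simp only [Pi.add_apply, Pi.smul_apply, smul_eq_mul] at h2
    simp only [sub_mulVec, Pi.sub_apply, Pi.neg_apply, smul_mulVec, one_mulVec,
      Pi.smul_apply, smul_eq_mul]
    linarith
  have hvT2 : (B - l • 1)⁻¹ *ᵥ (Cm *ᵥ vS) = -vT := by
    have e2 : Cm *ᵥ vS = -((B - l • 1) *ᵥ vT) := by rw [e1, neg_neg]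
    rw [e2, mulVec_neg, mulVec_mulVec, nonsing_inv_mul _ hdet, one_mulVec]
  rw [red, ← hBd, ← hCd, ← hDd, sub_mulVec, ← mulVec_mulVec, ← mulVec_mulVec, hvT2,
    mulVec_neg, sub_neg_eq_add]
  exact hS


theorem latent_symmetry_eigenvector_sign
    {n : ℕ} (M : Matrix (Fin n) (Fin n) ℝ) (S : Finset (Fin n))
    (l : ℝ) (hl : l ∉ spectrum ℝ (subm M Sᶜ Sᶜ))
    (h_simple : M.charpoly.rootMultiplicity l = 1)
    (v : Fin n → ℝ) (hv_ne : v ≠ 0) (h_eig : M *ᵥ v = l • v)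
    (φ : Equiv.Perm S)
    (h_auto : ∀ i j : S, red M S l i j = red M S l (φ i) (φ j))
    (h_simple_red : (red M S l).charpoly.rootMultiplicity l = 1)
    (hvS_ne : (fun i : S => v i.1) ≠ 0) :
    (∀ i : S, v i.1 = v (φ i).1) ∨ (∀ i : S, v i.1 = -v (φ i).1) := by
  classical
  set A := red M S l with hA
  set vS : {x // x ∈ S} → ℝ := fun i => v i.1 with hvS
  have hAvS : A *ᵥ vS = l • vS := aux_proj M S l hl v h_eig
  set u : {x // x ∈ S} → ℝ := fun i => vS (φ i) with hu
  have hAu : A *ᵥ u = l • u := by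
    funext i
    have h1 : (A *ᵥ u) i = ∑ j, A (φ i) (φ j) * vS (φ j) := by
      simp only [mulVec, dotProduct, hu]
      exact Finset.sum_congr rfl fun j _ => by rw [← h_auto i j]
    have h2 : ∑ j, A (φ i) (φ j) * vS (φ j) = ∑ k, A (φ i) k * vS k :=
      Equiv.sum_comp φ (fun k => A (φ i) k * vS k)
    have h3 : (∑ k, A (φ i) k * vS k) = (A *ᵥ vS) (φ i) := rfl
    rw [h1, h2, h3, hAvS]
    simp [hu]
  obtain ⟨c, hcu⟩ := aux_eig_unique A l h_simple_red vS u hAvS hAu hvS_ne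
  have hstep : ∀ i, vS (φ i) = c * vS i := by
    intro i
    have := congrFun hcu i
    simpa [hu] using this
  have hiter : ∀ (k : ℕ) (i), vS ((φ ^ k) i) = c ^ k * vS i := by
    intro k
    induction k with
    | zero => simp
    | succ k ih =>
      intro i
      rw [pow_succ, Equiv.Perm.mul_apply, ih (φ i), hstep i, pow_succ]
      ring
  obtain ⟨i0, hi0⟩ : ∃ i, vS i ≠ 0 := Function.ne_iff.mp hvS_ne
  have hN : 0 < orderOf φ := orderOf_pos φ
  have hcN : c ^ orderOf φ = 1 := by
    have h4 := hiter (orderOf φ) i0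
    rw [pow_orderOf_eq_one φ] at h4
    simp only [Equiv.Perm.one_apply] at h4
    have h5 : (c ^ orderOf φ - 1) * vS i0 = 0 := by linarith
    rcases mul_eq_zero.mp h5 with h6 | h6
    · linarith
    · exact absurd h6 hi0
  rcases (pow_eq_one_iff_of_ne_zero hN.ne').1 hcN with h1 | ⟨h1, _⟩
  · left
    intro i
    have := hstep i
    rw [h1, one_mul] at this
    exact this.symm
  · right
    intro i
    have := hstep i
    rw [h1] at this
    show vS i = -vS (φ i)
    rw [this]; ring
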